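/- For the symplectic discretization with equal parameter a, the discrete Demkov–Fradkin quantity F = p_1·p_2 + ((2a-1)/2)·hω²·(q_1·p_2 + q_2·p_1) + ω²·q_1·q_2 is an exact invariant: F(q_1',p_1',q_2',p_2') = F(q_1,p_1,q_2,p_2). -/

import Mathlib

/-- The discrete Demkov–Fradkin quantity
`F = p₁p₂ + ((2a-1)/2)hω²(q₁p₂ + q₂p₁) + ω²q₁q₂` is an exact invariant of the symplectic
discretization of the isotropic harmonic oscillator with equal parameter `a`. -/
theorem discrete_demkov_fradkin_invariant (h ω a : ℝ) (Δ : ℝ)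
    (hΔdef : Δ = 1 + h ^ 2 * ω ^ 2 * (1 - a) * a) (hΔ : Δ ≠ 0)
    (q₁ p₁ q₂ p₂ q₁' p₁' q₂' p₂' : ℝ)
    (hq₁' : q₁' = ((1 - h ^ 2 * ω ^ 2 * (1 - a) ^ 2) * q₁ + h * p₁) / Δ)
    (hp₁' : p₁' = -(h * ω ^ 2 * (h * a ^ 2 * p₁ + q₁) - p₁) / Δ)
    (hq₂' : q₂' = ((1 - h ^ 2 * ω ^ 2 * (1 - a) ^ 2) * q₂ + h * p₂) / Δ)
    (hp₂' : p₂' = -(h * ω ^ 2 * (h * a ^ 2 * p₂ + q₂) - p₂) / Δ)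
    (F : ℝ → ℝ → ℝ → ℝ → ℝ)
    (hF : ∀ x₁ y₁ x₂ y₂, F x₁ y₁ x₂ y₂ =
      y₁ * y₂ + (2 * a - 1) / 2 * h * ω ^ 2 * (x₁ * y₂ + x₂ * y₁) + ω ^ 2 * x₁ * x₂) :
    F q₁' p₁' q₂' p₂' = F q₁ p₁ q₂ p₂ := by
  subst hΔdef hq₁' hp₁' hq₂' hp₂'
  rw [hF, hF]
  field_simp
  have hΔ' : 1 + h ^ 2 * ω ^ 2 * a * (1 - a) ≠ 0 := by convert hΔ using 1; ring
  rw [div_eq_iff (pow_ne_zero 2 hΔ')]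
  ring
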